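/- For every n ∈ ℕ and every monotone (nondecreasing) function D : ℕ → ℕ there exists M ∈ ℕ such that for every field K and every sequence Λ₁, Λ₂, Λ₃, … of sets of polynomials in K[X₁,…,Xₙ] satisfying (a) every element of Λᵢ has total degree at most D(i), and (b) the generated ideals form an ascending chain (Λ₁) ⊆ (Λ₂) ⊆ (Λ₃) ⊆ ⋯, there is some j with 1 ≤ j ≤ M and (Λ_{j+1}) ⊆ (Λ_j). -/

import Mathlib

namespace EffHB

noncomputable section

open Finsupp

variable {n : ℕ}

/-- degree-lex synonym -/
abbrev S (n : ℕ) := ℕ ×ₗ Lex (Fin n →₀ ℕ)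

def ord (a : Fin n →₀ ℕ) : S n := toLex (a.degree, toLex a)

lemma ord_injective : Function.Injective (ord (n := n)) := by
  intro a b h
  have := congrArg (fun x : S n => (ofLex x).2) h
  exact congrArg ofLex this

lemma degree_add (a b : Fin n →₀ ℕ) : (a + b).degree = a.degree + b.degree := by
  simp [Finsupp.degree_eq_weight_one, map_add]

lemma degree_le_of_ord_le {a b : Fin n →₀ ℕ} (h : ord a ≤ ord b) : a.degree ≤ b.degree := by
  rcases Prod.Lex.le_iff.mp h with h | h
  · exact h.le
  · exact h.1.le

lemma ord_add_le_left {a b : Fin n →₀ ℕ} (c : Fin n →₀ ℕ) (h : ord a ≤ ord b) :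
    ord (c + a) ≤ ord (c + b) := by
  rcases Prod.Lex.le_iff.mp h with h | h
  · apply Prod.Lex.le_iff.mpr
    left
    show (c + a).degree < (c + b).degree
    rw [degree_add, degree_add]
    exact Nat.add_lt_add_left h _
  · apply Prod.Lex.le_iff.mpr
    right
    constructor
    · show (c + a).degree = (c + b).degree
      rw [degree_add, degree_add]
      exact congrArg (c.degree + ·) h.1
    · have h2 : (toLex a : Lex (Fin n →₀ ℕ)) ≤ toLex b := h.2
      have h3 : (toLex c : Lex (Fin n →₀ ℕ)) + toLex a ≤ toLex c + toLex b :=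
        add_le_add_right h2 _
      exact h3


section LM

open MvPolynomial
open scoped Classical

variable {R : Type*} [CommSemiring R]

def lm (p : MvPolynomial (Fin n) R) : Fin n →₀ ℕ :=
  if hp : p = 0 then 0
  else (Finset.exists_max_image p.support ord (support_nonempty.mpr hp)).choose

lemma lm_mem {p : MvPolynomial (Fin n) R} (hp : p ≠ 0) : lm p ∈ p.support := by
  rw [lm, dif_neg hp]
  exact (Finset.exists_max_image p.support ord (support_nonempty.mpr hp)).choose_spec.1

lemma lm_max {p : MvPolynomial (Fin n) R} (hp : p ≠ 0) {e : Fin n →₀ ℕ} (he : e ∈ p.support) :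
    ord e ≤ ord (lm p) := by
  rw [lm, dif_neg hp]
  exact (Finset.exists_max_image p.support ord (support_nonempty.mpr hp)).choose_spec.2 e he

lemma coeff_lm_ne_zero {p : MvPolynomial (Fin n) R} (hp : p ≠ 0) : p.coeff (lm p) ≠ 0 :=
  MvPolynomial.mem_support_iff.mp (lm_mem hp)

lemma degree_lm_le {p : MvPolynomial (Fin n) R} (hp : p ≠ 0) :
    (lm p).degree ≤ p.totalDegree := by
  have := le_totalDegree (lm_mem hp)
  simpa [Finsupp.degree_apply, Finsupp.sum] using this

lemma totalDegree_le_degree_lm {p : MvPolynomial (Fin n) R} (hp : p ≠ 0) :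
    p.totalDegree ≤ (lm p).degree := by
  apply Finset.sup_le
  intro e he
  have := degree_le_of_ord_le (lm_max hp he)
  simpa [Finsupp.degree_apply, Finsupp.sum] using this

end LM

section NF

open MvPolynomial
open scoped Classical

variable {K : Type*} [Field K]

theorem exists_normal (J : Ideal (MvPolynomial (Fin n) K)) {f : MvPolynomial (Fin n) K}
    (hf : f ∉ J) :
    ∃ g : MvPolynomial (Fin n) K, g ≠ 0 ∧ f - g ∈ J ∧ g.totalDegree ≤ f.totalDegree ∧
      ∀ h ∈ J, h ≠ 0 → ¬ lm h ≤ lm g := by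
  have hf0 : f ≠ 0 := fun h => hf (h ▸ J.zero_mem)
  set T : Set (S n) := {s | ∃ g : MvPolynomial (Fin n) K, g ≠ 0 ∧ f - g ∈ J ∧ s = ord (lm g)}
    with hT_def
  have hT : T.Nonempty := ⟨ord (lm f), f, hf0, by simpa using J.zero_mem, rfl⟩
  obtain ⟨s, ⟨g, hg0, hgJ, rfl⟩, hmin⟩ :=
    (IsWellFounded.wf (r := ((· < ·) : S n → S n → Prop))).has_min T hT
  have hminf : ord (lm g) ≤ ord (lm f) :=
    not_lt.mp (hmin _ ⟨f, hf0, by simpa using J.zero_mem, rfl⟩)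
  refine ⟨g, hg0, hgJ, ?_, ?_⟩
  · calc g.totalDegree ≤ (lm g).degree := totalDegree_le_degree_lm hg0
    _ ≤ (lm f).degree := degree_le_of_ord_le hminf
    _ ≤ f.totalDegree := degree_lm_le hf0
  · intro h hhJ hh0 hle
    set a : Fin n →₀ ℕ := lm g - lm h with ha_def
    have ha : lm h + a = lm g := add_tsub_cancel_of_le hle
    have ha' : a ≤ lm g := by rw [← ha]; exact le_add_self
    have hsub : lm g - a = lm h := by rw [← ha, add_tsub_cancel_right]
    set c : K := g.coeff (lm g) / h.coeff (lm h) with hc_def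
    set q : MvPolynomial (Fin n) K := g - monomial a c * h with hq_def
    have hq_coeff : ∀ e, q.coeff e
        = g.coeff e - (if a ≤ e then c * h.coeff (e - a) else 0) := by
      intro e
      rw [hq_def, coeff_sub, coeff_monomial_mul']
    have hqlm : q.coeff (lm g) = 0 := by
      rw [hq_coeff, if_pos ha', hsub, hc_def,
        div_mul_cancel₀ _ (coeff_lm_ne_zero hh0), sub_self]
    have hqJ : f - q ∈ J := by
      have : f - q = (f - g) + monomial a c * h := by rw [hq_def]; ring
      rw [this]
      exact J.add_mem hgJ (J.mul_mem_left _ hhJ)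
    have hq0 : q ≠ 0 := by
      intro h0
      rw [h0, sub_zero] at hqJ
      exact hf hqJ
    have hqsupp : ∀ e ∈ q.support, ord e < ord (lm g) := by
      intro e he
      have hne : e ≠ lm g := by
        intro h'
        exact (MvPolynomial.mem_support_iff.mp he) (h' ▸ hqlm)
      have hle' : ord e ≤ ord (lm g) := by
        by_cases hge : g.coeff e ≠ 0
        · exact lm_max hg0 (MvPolynomial.mem_support_iff.mpr hge)
        · push_neg at hge
          have hqe := MvPolynomial.mem_support_iff.mp he
          rw [hq_coeff, hge, zero_sub, neg_ne_zero] at hqe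
          by_cases hae : a ≤ e
          · rw [if_pos hae] at hqe
            have hh' : h.coeff (e - a) ≠ 0 := right_ne_zero_of_mul hqe
            have h1 : ord (e - a) ≤ ord (lm h) := lm_max hh0 (MvPolynomial.mem_support_iff.mpr hh')
            have h2 : ord (a + (e - a)) ≤ ord (a + lm h) := ord_add_le_left a h1
            rwa [add_tsub_cancel_of_le hae, add_comm, ha] at h2
          · rw [if_neg hae] at hqe
            exact absurd rfl hqe
      exact lt_of_le_of_ne hle' (fun h' => hne (ord_injective h'))
    exact hmin _ ⟨q, hq0, hqJ, rfl⟩ (hqsupp _ (lm_mem hq0))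

end NF

section Bound

theorem exists_antichain_bound (n : ℕ) (D : ℕ → ℕ) :
    ∃ M : ℕ, 1 ≤ M ∧ ∀ m : ℕ → (Fin n →₀ ℕ),
      (∀ j, 1 ≤ j → j ≤ M → (m j).degree ≤ D j) →
      ∃ i j, 1 ≤ i ∧ i < j ∧ j ≤ M ∧ m i ≤ m j := by
  by_contra hcon
  push_neg at hcon
  have hsel : ∀ N : ℕ, ∃ m : ℕ → (Fin n →₀ ℕ),
      (∀ j, 1 ≤ j → j ≤ N + 1 → (m j).degree ≤ D j) ∧
      ∀ i j, 1 ≤ i → i < j → j ≤ N + 1 → ¬ m i ≤ m j :=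
    fun N => hcon (N + 1) (Nat.le_add_left 1 N)
  choose ms hms1 hms2 using hsel
  set F : ℕ → ℕ → (Fin n →₀ ℕ) := fun N j => if 1 ≤ j ∧ j ≤ N + 1 then ms N j else 0
    with hF_def
  have hFdeg : ∀ N j, (F N j).degree ≤ D j := by
    intro N j
    rw [hF_def]; dsimp only
    split_ifs with h
    · exact hms1 N j h.1 h.2
    · simp
  have hFbad : ∀ N i j, 1 ≤ i → i < j → j ≤ N + 1 → ¬ F N i ≤ F N j := by
    intro N i j h1 h2 h3
    rw [hF_def]; dsimp only
    rw [if_pos ⟨h1, le_trans h2.le h3⟩, if_pos ⟨h1.trans h2.le, h3⟩]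
    exact hms2 N i j h1 h2 h3
  set U : Ultrafilter ℕ := Filter.hyperfilter ℕ with hU_def
  have hpick : ∀ j : ℕ, ∃ v : Fin n →₀ ℕ, {N | F N j = v} ∈ U := by
    intro j
    have hfin := Finsupp.finite_of_degree_le (σ := Fin n) (D j)
    have hcover : (⋃ v ∈ {a : Fin n →₀ ℕ | a.degree ≤ D j}, {N | F N j = v}) ∈ U := by
      have heq : (⋃ v ∈ {a : Fin n →₀ ℕ | a.degree ≤ D j}, {N | F N j = v}) = Set.univ := by
        ext N
        simp only [Set.mem_iUnion, Set.mem_setOf_eq, Set.mem_univ, iff_true]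
        exact ⟨F N j, hFdeg N j, rfl⟩
      rw [heq]
      exact Filter.univ_mem
    obtain ⟨v, _, hv⟩ := (Ultrafilter.finite_biUnion_mem_iff hfin).mp hcover
    exact ⟨v, hv⟩
  choose L hL using hpick
  obtain ⟨k, l, hkl, hle⟩ := wellQuasiOrdered_le (α := Fin n →₀ ℕ)
      (fun k => L (k + 1))
  have hAc : {N : ℕ | l + 1 ≤ N + 1} ∈ U := by
    have hfin : {N : ℕ | l + 1 ≤ N + 1}ᶜ.Finite := by
      apply Set.Finite.subset (Set.finite_Iio (l + 1))
      intro N hN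
      simp only [Set.mem_compl_iff, Set.mem_setOf_eq, not_le] at hN
      simp only [Set.mem_Iio]
      omega
    have := Filter.compl_mem_hyperfilter_of_finite hfin
    rwa [compl_compl, ← hU_def] at this
  have hmem : ({N | F N (k + 1) = L (k + 1)} ∩ {N | F N (l + 1) = L (l + 1)}
      ∩ {N : ℕ | l + 1 ≤ N + 1}) ∈ U :=
    Filter.inter_mem (Filter.inter_mem (hL _) (hL _)) hAc
  obtain ⟨N, ⟨hNi, hNj⟩, hNl⟩ := Filter.nonempty_of_mem (Ultrafilter.mem_coe.mpr hmem)
  have hbad := hFbad N (k + 1) (l + 1) (Nat.le_add_left 1 k) (by omega) hNl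
  rw [Set.mem_setOf_eq] at hNi hNj
  rw [hNi, hNj] at hbad
  exact hbad hle

end Bound
end

end EffHB

/-- Effective Hilbert Basis Theorem: for every `n` and monotone `D : ℕ → ℕ` there is a
uniform bound `M` such that any ascending chain of ideals `(Λ₁) ⊆ (Λ₂) ⊆ ⋯` in
`K[X₁,…,Xₙ]`, where the generators in `Λᵢ` have total degree at most `D i`, stabilizes
for one step at some `j` with `1 ≤ j ≤ M`. -/
theorem effective_hilbert_basis :
    ∀ (n : ℕ) (D : ℕ → ℕ), Monotone D → ∃ M : ℕ,
      ∀ (K : Type) [Field K] (Λ : ℕ → Set (MvPolynomial (Fin n) K)),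
        (∀ i, 1 ≤ i → ∀ f ∈ Λ i, f.totalDegree ≤ D i) →
        (∀ i, 1 ≤ i → Ideal.span (Λ i) ≤ Ideal.span (Λ (i + 1))) →
        ∃ j : ℕ, 1 ≤ j ∧ j ≤ M ∧ Ideal.span (Λ (j + 1)) ≤ Ideal.span (Λ j) := by
  intro n D hD
  obtain ⟨M, hM1, hB⟩ := EffHB.exists_antichain_bound n (fun j => D (j + 1))
  refine ⟨M, ?_⟩
  intro K _ Λ hdeg hchain
  by_contra hcon
  push_neg at hcon
  have hchain' : ∀ a b, 1 ≤ a → a ≤ b → Ideal.span (Λ a) ≤ Ideal.span (Λ b) := by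
    intro a b ha hab
    induction b, hab using Nat.le_induction with
    | base => exact le_rfl
    | succ b hab ih => exact ih.trans (hchain b (ha.trans hab))
  have hex : ∀ j, 1 ≤ j → j ≤ M → ∃ p, p ∈ Λ (j + 1) ∧ p ∉ Ideal.span (Λ j) := by
    intro j h1 h2
    have h := hcon j h1 h2
    rw [Ideal.span_le] at h
    obtain ⟨p, hp1, hp2⟩ := Set.not_subset.mp h
    exact ⟨p, hp1, hp2⟩
  classical
  set f : ℕ → MvPolynomial (Fin n) K := fun j =>
    if h : 1 ≤ j ∧ j ≤ M then (hex j h.1 h.2).choose else 0 with hf_def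
  have hf1 : ∀ j, 1 ≤ j → j ≤ M → f j ∈ Λ (j + 1) := by
    intro j h1 h2
    rw [hf_def]; dsimp only
    rw [dif_pos ⟨h1, h2⟩]
    exact (hex j h1 h2).choose_spec.1
  have hf2 : ∀ j, 1 ≤ j → j ≤ M → f j ∉ Ideal.span (Λ j) := by
    intro j h1 h2
    rw [hf_def]; dsimp only
    rw [dif_pos ⟨h1, h2⟩]
    exact (hex j h1 h2).choose_spec.2
  set J : ℕ → Ideal (MvPolynomial (Fin n) K) := fun j =>
    Ideal.span {p | ∃ i, 1 ≤ i ∧ i < j ∧ p = f i} with hJ_def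
  have hJle : ∀ j, j ≤ M → J j ≤ Ideal.span (Λ j) := by
    intro j hjM
    apply Ideal.span_le.mpr
    rintro p ⟨i, h1, h2, rfl⟩
    have hiM : i ≤ M := le_trans h2.le hjM
    have hmem : f i ∈ Ideal.span (Λ (i + 1)) := Ideal.subset_span (hf1 i h1 hiM)
    exact hchain' (i + 1) j (Nat.le_add_left 1 i) h2 hmem
  have hfJ : ∀ j, 1 ≤ j → j ≤ M → f j ∉ J j :=
    fun j h1 h2 hmem => hf2 j h1 h2 (hJle j h2 hmem)
  have hg : ∀ j, 1 ≤ j → j ≤ M → ∃ g : MvPolynomial (Fin n) K, g ≠ 0 ∧ f j - g ∈ J j ∧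
      g.totalDegree ≤ (f j).totalDegree ∧ ∀ h ∈ J j, h ≠ 0 → ¬ EffHB.lm h ≤ EffHB.lm g :=
    fun j h1 h2 => EffHB.exists_normal (J j) (hfJ j h1 h2)
  set g : ℕ → MvPolynomial (Fin n) K := fun j =>
    if h : 1 ≤ j ∧ j ≤ M then (hg j h.1 h.2).choose else 0 with hg_def
  have hgspec : ∀ j, 1 ≤ j → j ≤ M → g j ≠ 0 ∧ f j - g j ∈ J j ∧
      (g j).totalDegree ≤ (f j).totalDegree ∧ ∀ h ∈ J j, h ≠ 0 → ¬ EffHB.lm h ≤ EffHB.lm (g j) := by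
    intro j h1 h2
    rw [hg_def]; dsimp only
    rw [dif_pos ⟨h1, h2⟩]
    exact (hg j h1 h2).choose_spec
  have hm : ∀ j, 1 ≤ j → j ≤ M → (EffHB.lm (g j)).degree ≤ D (j + 1) := by
    intro j h1 h2
    calc (EffHB.lm (g j)).degree ≤ (g j).totalDegree := EffHB.degree_lm_le (hgspec j h1 h2).1
    _ ≤ (f j).totalDegree := (hgspec j h1 h2).2.2.1
    _ ≤ D (j + 1) := hdeg (j + 1) (Nat.le_add_left 1 j) (f j) (hf1 j h1 h2)
  obtain ⟨i, j, h1, hij, hjM, hle⟩ := hB (fun j => EffHB.lm (g j)) hm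
  have hiM : i ≤ M := le_trans hij.le hjM
  have h1j : 1 ≤ j := h1.trans hij.le
  have hJij : J i ≤ J j := by
    rw [hJ_def]
    apply Ideal.span_mono
    rintro p ⟨i', h1', h2', rfl⟩
    exact ⟨i', h1', h2'.trans hij, rfl⟩
  have hgiJ : g i ∈ J j := by
    have hfi : f i ∈ J j := Ideal.subset_span ⟨i, h1, hij, rfl⟩
    have hsub : f i - g i ∈ J j := hJij (hgspec i h1 hiM).2.1
    have : g i = f i - (f i - g i) := by ring
    rw [this]
    exact Ideal.sub_mem _ hfi hsub
  exact (hgspec j h1j hjM).2.2.2 (g i) hgiJ (hgspec i h1 hiM).1 hle
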